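/- Let L, M ≥ 1 be integers. The triangulation T(3L,3M) admits a non-singular proper 4-coloring if and only if L and M are both even. Moreover, if L = 2ℓ and M = 2m, then the coloring c_ns of T(6ℓ,6m) defined by c_ns(x,y) = 0 if x and y are both odd, 1 if x is odd and y is even, 2 if x is even and y is odd, and 3 if x and y are both even (this is well defined since the moduli 6ℓ and 6m are even) is a non-singular proper 4-coloring with |deg(c_ns)| = 18ℓm; in particular, if ℓ and m are both odd, then there exist two proper 4-colorings of T(6ℓ,6m) that are not Kempe equivalent. -/

import Mathlib

/-- A proper `q`-coloring of a simple graph. -/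
def IsProperColoring {V : Type*} (G : SimpleGraph V) {q : ℕ} (f : V → Fin q) : Prop :=
  ∀ ⦃u v : V⦄, G.Adj u v → f u ≠ f v

open Classical in
/-- A single Kempe change. -/
def KempeStep {V : Type*} (G : SimpleGraph V) {q : ℕ} (f g : V → Fin q) : Prop :=
  ∃ a b : Fin q, a ≠ b ∧
    ∃ C : (G.induce {v | f v = a ∨ f v = b}).ConnectedComponent,
      ∀ v : V,
        g v = if h : f v = a ∨ f v = b then
                if (G.induce {v | f v = a ∨ f v = b}).connectedComponentMk ⟨v, h⟩ = C
                then Equiv.swap a b (f v) else f v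
              else f v

/-- Kempe equivalence: a finite sequence of Kempe changes. -/
def KempeEquiv {V : Type*} (G : SimpleGraph V) {q : ℕ} (f g : V → Fin q) : Prop :=
  Relation.ReflTransGen (KempeStep G) f g

/-- The six neighbour displacement vectors of the triangular lattice. -/
def hexDirsM (r s : ℕ) : Set (ZMod r × ZMod s) :=
  {(1,0), (-1,0), (0,1), (0,-1), (1,1), (-1,-1)}

/-- The triangulation `T(r,s)` of the torus. -/
def TriRS (r s : ℕ) : SimpleGraph (ZMod r × ZMod s) where
  Adj u v := u ≠ v ∧ v - u ∈ hexDirsM r s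
  symm := by
    constructor
    rintro u v ⟨hne, hmem⟩
    refine ⟨hne.symm, ?_⟩
    rw [show u - v = -(v - u) from (neg_sub v u).symm]
    simp only [hexDirsM, Set.mem_insert_iff, Set.mem_singleton_iff] at hmem ⊢
    rcases hmem with h|h|h|h|h|h <;> rw [h] <;> simp [Prod.ext_iff]
  loopless := ⟨fun u h => h.1 rfl⟩

/-- The sign contribution of a face whose ordered vertex colors are `(a,b,c)`. -/
def faceSign (a b c : Fin 4) : ℤ :=
  if (a, b, c) = ((0 : Fin 4), (1 : Fin 4), (2 : Fin 4)) ∨ (a, b, c) = (1, 2, 0)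
      ∨ (a, b, c) = (2, 0, 1) then 1
  else if (a, b, c) = ((0 : Fin 4), (2 : Fin 4), (1 : Fin 4)) ∨ (a, b, c) = (2, 1, 0)
      ∨ (a, b, c) = (1, 0, 2) then -1
  else 0

/-- The degree of a 4-coloring of `T(r,s)`. -/
def degRS (r s : ℕ) (f : ZMod r × ZMod s → Fin 4) : ℤ :=
  ∑ i ∈ Finset.range r, ∑ j ∈ Finset.range s,
    (faceSign (f ((i : ZMod r), (j : ZMod s)))
              (f ((i : ZMod r) + 1, (j : ZMod s) + 1))
              (f ((i : ZMod r), (j : ZMod s) + 1))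
      + faceSign (f ((i : ZMod r), (j : ZMod s)))
                 (f ((i : ZMod r) + 1, (j : ZMod s)))
                 (f ((i : ZMod r) + 1, (j : ZMod s) + 1)))

/-- The six neighbour displacement vectors, as integer vectors. -/
def hexDirs : Finset (ℤ × ℤ) := {(1,0), (-1,0), (0,1), (0,-1), (1,1), (-1,-1)}

/-- Each edge of T(r,s) lies in exactly two triangular faces.  For the edge
from `x` to `x + d` (`d` one of the six displacement vectors), this is the
pair of vertices completing those two faces. -/
def apexRS (r s : ℕ) (x : ZMod r × ZMod s) (d : ℤ × ℤ) :
    (ZMod r × ZMod s) × (ZMod r × ZMod s) :=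
  if d = (1, 0) then (x + (1, 1), x - (0, 1))
  else if d = (-1, 0) then (x + (0, 1), x - (1, 1))
  else if d = (0, 1) then (x + (1, 1), x - (1, 0))
  else if d = (0, -1) then (x + (1, 0), x - (1, 1))
  else if d = (1, 1) then (x + (0, 1), x + (1, 0))
  else (x - (1, 0), x - (0, 1))

/-- A 4-coloring of T(r,s) is non-singular if every edge is non-singular for
it, i.e. the two vertices completing the two faces of each edge get distinct
colors. -/
def NonSingularRS (r s : ℕ) (f : ZMod r × ZMod s → Fin 4) : Prop :=
  ∀ x : ZMod r × ZMod s, ∀ d ∈ hexDirs,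
    f (apexRS r s x d).1 ≠ f (apexRS r s x d).2

/-- The explicit coloring `c_ns`, defined by the parities of the coordinates. -/
def cns (r s : ℕ) : ZMod r × ZMod s → Fin 4 := fun x =>
  if x.1.val % 2 = 1 then (if x.2.val % 2 = 1 then 0 else 1)
  else (if x.2.val % 2 = 1 then 2 else 3)


/-! ### Local machinery for the mod-4 Kempe invariance of the degree -/

def eps4 (a b c : Fin 4) : ZMod 4 :=
  if (a, b, c) = ((0 : Fin 4), (1 : Fin 4), (2 : Fin 4)) ∨ (a, b, c) = (1, 2, 0)
      ∨ (a, b, c) = (2, 0, 1) then 1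
  else if (a, b, c) = ((0 : Fin 4), (2 : Fin 4), (1 : Fin 4)) ∨ (a, b, c) = (2, 1, 0)
      ∨ (a, b, c) = (1, 0, 2) then 3
  else 0

lemma epsZ : ∀ a b c : Fin 4, ((faceSign a b c : ℤ) : ZMod 4) = eps4 a b c := by decide

def swc (a b c : Fin 4) : Fin 4 := if c = a then b else if c = b then a else c

lemma swap_eq_swc : ∀ a b c : Fin 4, Equiv.swap a b c = swc a b c := by decide

def KG (a b : Fin 4) (c : Fin 4) (bit : Bool) : Fin 4 := if bit then swc a b c else c
def phiT : ℕ → ℕ → ℕ → ℕ → Bool → ℕ → Bool → ZMod 4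
  | 0, 0, 1, 0, false, 2, false => 2
  | 0, 1, 0, 0, false, 2, false => 2
  | 0, 0, 1, 0, false, 3, false => 2
  | 0, 1, 0, 0, false, 3, false => 2
  | 0, 0, 1, 0, true, 2, false => 2
  | 0, 1, 0, 0, true, 2, false => 2
  | 0, 0, 1, 1, false, 0, false => 2
  | 0, 1, 0, 1, false, 0, false => 2
  | 0, 0, 1, 1, false, 2, false => 2
  | 0, 1, 0, 1, false, 2, false => 2
  | 0, 0, 1, 1, true, 2, false => 2
  | 0, 1, 0, 1, true, 2, false => 2
  | 0, 0, 1, 2, false, 0, false => 2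
  | 0, 1, 0, 2, false, 0, false => 2
  | 0, 0, 1, 2, false, 3, false => 2
  | 0, 1, 0, 2, false, 3, false => 2
  | 1, 0, 1, 0, false, 1, false => 2
  | 1, 1, 0, 0, false, 1, false => 2
  | 1, 0, 1, 0, false, 2, false => 2
  | 1, 1, 0, 0, false, 2, false => 2
  | 1, 0, 1, 2, false, 0, false => 2
  | 1, 1, 0, 2, false, 0, false => 2
  | 1, 0, 1, 2, false, 0, true => 2
  | 1, 1, 0, 2, false, 0, true => 2
  | 1, 0, 1, 2, false, 1, false => 2
  | 1, 1, 0, 2, false, 1, false => 2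
  | 1, 0, 1, 2, false, 1, true => 2
  | 1, 1, 0, 2, false, 1, true => 2
  | 1, 0, 1, 3, false, 0, false => 2
  | 1, 1, 0, 3, false, 0, false => 2
  | 1, 0, 1, 3, false, 2, false => 2
  | 1, 1, 0, 3, false, 2, false => 2
  | 2, 0, 1, 0, false, 1, false => 2
  | 2, 1, 0, 0, false, 1, false => 2
  | 2, 0, 1, 0, false, 2, false => 2
  | 2, 1, 0, 0, false, 2, false => 2
  | 2, 0, 1, 2, false, 0, false => 2
  | 2, 1, 0, 2, false, 0, false => 2
  | 2, 0, 1, 2, false, 0, true => 2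
  | 2, 1, 0, 2, false, 0, true => 2
  | 2, 0, 1, 2, false, 1, false => 2
  | 2, 1, 0, 2, false, 1, false => 2
  | 2, 0, 1, 2, false, 1, true => 2
  | 2, 1, 0, 2, false, 1, true => 2
  | 2, 0, 1, 3, false, 0, false => 2
  | 2, 1, 0, 3, false, 0, false => 2
  | 2, 0, 1, 3, false, 2, false => 2
  | 2, 1, 0, 3, false, 2, false => 2
  | 0, 0, 2, 0, false, 2, false => 2
  | 0, 2, 0, 0, false, 2, false => 2
  | 0, 0, 2, 0, false, 3, false => 2
  | 0, 2, 0, 0, false, 3, false => 2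
  | 0, 0, 2, 0, true, 2, true => 2
  | 0, 2, 0, 0, true, 2, true => 2
  | 0, 0, 2, 1, false, 0, true => 2
  | 0, 2, 0, 1, false, 0, true => 2
  | 0, 0, 2, 1, false, 2, false => 2
  | 0, 2, 0, 1, false, 2, false => 2
  | 0, 0, 2, 1, false, 2, true => 2
  | 0, 2, 0, 1, false, 2, true => 2
  | 0, 0, 2, 1, false, 3, false => 2
  | 0, 2, 0, 1, false, 3, false => 2
  | 0, 0, 2, 2, true, 0, true => 2
  | 0, 2, 0, 2, true, 0, true => 2
  | 1, 0, 2, 0, false, 1, false => 2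
  | 1, 2, 0, 0, false, 1, false => 2
  | 1, 0, 2, 0, false, 2, false => 2
  | 1, 2, 0, 0, false, 2, false => 2
  | 1, 0, 2, 0, false, 3, false => 2
  | 1, 2, 0, 0, false, 3, false => 2
  | 1, 0, 2, 0, true, 3, false => 2
  | 1, 2, 0, 0, true, 3, false => 2
  | 1, 0, 2, 1, false, 0, false => 2
  | 1, 2, 0, 1, false, 0, false => 2
  | 1, 0, 2, 1, false, 0, true => 2
  | 1, 2, 0, 1, false, 0, true => 2
  | 1, 0, 2, 1, false, 2, false => 2
  | 1, 2, 0, 1, false, 2, false => 2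
  | 1, 0, 2, 1, false, 2, true => 2
  | 1, 2, 0, 1, false, 2, true => 2
  | 1, 0, 2, 1, false, 3, false => 2
  | 1, 2, 0, 1, false, 3, false => 2
  | 1, 0, 2, 2, false, 3, false => 2
  | 1, 2, 0, 2, false, 3, false => 2
  | 1, 0, 2, 2, true, 3, false => 2
  | 1, 2, 0, 2, true, 3, false => 2
  | 1, 0, 2, 3, false, 0, true => 2
  | 1, 2, 0, 3, false, 0, true => 2
  | 1, 0, 2, 3, false, 2, false => 2
  | 1, 2, 0, 3, false, 2, false => 2
  | 1, 0, 2, 3, false, 2, true => 2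
  | 1, 2, 0, 3, false, 2, true => 2
  | 2, 0, 2, 0, true, 1, false => 2
  | 2, 2, 0, 0, true, 1, false => 2
  | 2, 0, 2, 0, true, 2, true => 2
  | 2, 2, 0, 0, true, 2, true => 2
  | 2, 0, 2, 2, false, 0, false => 2
  | 2, 2, 0, 2, false, 0, false => 2
  | 2, 0, 2, 2, false, 1, false => 2
  | 2, 2, 0, 2, false, 1, false => 2
  | 2, 0, 2, 2, true, 0, true => 2
  | 2, 2, 0, 2, true, 0, true => 2
  | 2, 0, 2, 2, true, 1, false => 2
  | 2, 2, 0, 2, true, 1, false => 2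
  | 2, 0, 2, 3, false, 0, false => 2
  | 2, 2, 0, 3, false, 0, false => 2
  | 2, 0, 2, 3, false, 1, false => 2
  | 2, 2, 0, 3, false, 1, false => 2
  | 0, 0, 3, 0, false, 1, false => 1
  | 0, 3, 0, 0, false, 1, false => 1
  | 0, 0, 3, 0, false, 2, false => 3
  | 0, 3, 0, 0, false, 2, false => 3
  | 0, 0, 3, 0, true, 1, false => 2
  | 0, 3, 0, 0, true, 1, false => 2
  | 0, 0, 3, 0, true, 2, false => 2
  | 0, 3, 0, 0, true, 2, false => 2
  | 0, 0, 3, 0, true, 3, true => 2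
  | 0, 3, 0, 0, true, 3, true => 2
  | 0, 0, 3, 1, false, 0, false => 2
  | 0, 3, 0, 1, false, 0, false => 2
  | 0, 0, 3, 1, false, 2, false => 3
  | 0, 3, 0, 1, false, 2, false => 3
  | 0, 0, 3, 1, false, 3, false => 1
  | 0, 3, 0, 1, false, 3, false => 1
  | 0, 0, 3, 2, false, 0, false => 2
  | 0, 3, 0, 2, false, 0, false => 2
  | 0, 0, 3, 2, false, 1, false => 1
  | 0, 3, 0, 2, false, 1, false => 1
  | 0, 0, 3, 2, false, 3, false => 3
  | 0, 3, 0, 2, false, 3, false => 3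
  | 1, 0, 3, 0, false, 1, false => 2
  | 1, 3, 0, 0, false, 1, false => 2
  | 1, 0, 3, 0, false, 2, false => 2
  | 1, 3, 0, 0, false, 2, false => 2
  | 1, 0, 3, 1, false, 0, false => 3
  | 1, 3, 0, 1, false, 0, false => 3
  | 1, 0, 3, 1, false, 0, true => 2
  | 1, 3, 0, 1, false, 0, true => 2
  | 1, 0, 3, 1, false, 2, false => 3
  | 1, 3, 0, 1, false, 2, false => 3
  | 1, 0, 3, 2, false, 0, false => 1
  | 1, 3, 0, 2, false, 0, false => 1
  | 1, 0, 3, 2, false, 0, true => 2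
  | 1, 3, 0, 2, false, 0, true => 2
  | 1, 0, 3, 2, false, 1, false => 1
  | 1, 3, 0, 2, false, 1, false => 1
  | 1, 0, 3, 3, false, 1, false => 3
  | 1, 3, 0, 3, false, 1, false => 3
  | 1, 0, 3, 3, false, 2, false => 1
  | 1, 3, 0, 3, false, 2, false => 1
  | 1, 0, 3, 3, true, 0, true => 2
  | 1, 3, 0, 3, true, 0, true => 2
  | 2, 0, 3, 0, false, 3, false => 2
  | 2, 3, 0, 0, false, 3, false => 2
  | 2, 0, 3, 0, true, 1, false => 2
  | 2, 3, 0, 0, true, 1, false => 2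
  | 2, 0, 3, 0, true, 2, false => 2
  | 2, 3, 0, 0, true, 2, false => 2
  | 2, 0, 3, 0, true, 3, true => 2
  | 2, 3, 0, 0, true, 3, true => 2
  | 2, 0, 3, 1, false, 0, false => 1
  | 2, 3, 0, 1, false, 0, false => 1
  | 2, 0, 3, 1, false, 2, false => 1
  | 2, 3, 0, 1, false, 2, false => 1
  | 2, 0, 3, 1, false, 3, false => 2
  | 2, 3, 0, 1, false, 3, false => 2
  | 2, 0, 3, 1, false, 3, true => 2
  | 2, 3, 0, 1, false, 3, true => 2
  | 2, 0, 3, 2, false, 0, false => 3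
  | 2, 3, 0, 2, false, 0, false => 3
  | 2, 0, 3, 2, false, 1, false => 3
  | 2, 3, 0, 2, false, 1, false => 3
  | 2, 0, 3, 2, false, 3, false => 2
  | 2, 3, 0, 2, false, 3, false => 2
  | 2, 0, 3, 2, false, 3, true => 2
  | 2, 3, 0, 2, false, 3, true => 2
  | 2, 0, 3, 3, false, 0, false => 2
  | 2, 3, 0, 3, false, 0, false => 2
  | 2, 0, 3, 3, false, 1, false => 1
  | 2, 3, 0, 3, false, 1, false => 1
  | 2, 0, 3, 3, false, 2, false => 3
  | 2, 3, 0, 3, false, 2, false => 3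
  | 2, 0, 3, 3, true, 1, false => 2
  | 2, 3, 0, 3, true, 1, false => 2
  | 2, 0, 3, 3, true, 2, false => 2
  | 2, 3, 0, 3, true, 2, false => 2
  | 0, 1, 2, 0, false, 1, false => 2
  | 0, 2, 1, 0, false, 1, false => 2
  | 0, 1, 2, 0, false, 3, false => 2
  | 0, 2, 1, 0, false, 3, false => 2
  | 0, 1, 2, 1, false, 0, false => 2
  | 0, 2, 1, 1, false, 0, false => 2
  | 0, 1, 2, 1, false, 3, false => 2
  | 0, 2, 1, 1, false, 3, false => 2
  | 0, 1, 2, 1, true, 0, false => 2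
  | 0, 2, 1, 1, true, 0, false => 2
  | 0, 1, 2, 2, false, 0, false => 2
  | 0, 2, 1, 2, false, 0, false => 2
  | 0, 1, 2, 2, false, 1, false => 2
  | 0, 2, 1, 2, false, 1, false => 2
  | 0, 1, 2, 2, true, 0, false => 2
  | 0, 2, 1, 2, true, 0, false => 2
  | 1, 1, 2, 0, false, 1, false => 2
  | 1, 2, 1, 0, false, 1, false => 2
  | 1, 1, 2, 0, false, 1, true => 2
  | 1, 2, 1, 0, false, 1, true => 2
  | 1, 1, 2, 0, false, 2, false => 2
  | 1, 2, 1, 0, false, 2, false => 2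
  | 1, 1, 2, 0, false, 2, true => 2
  | 1, 2, 1, 0, false, 2, true => 2
  | 1, 1, 2, 1, false, 0, false => 2
  | 1, 2, 1, 1, false, 0, false => 2
  | 1, 1, 2, 1, false, 2, false => 2
  | 1, 2, 1, 1, false, 2, false => 2
  | 1, 1, 2, 3, false, 0, false => 2
  | 1, 2, 1, 3, false, 0, false => 2
  | 1, 1, 2, 3, false, 1, false => 2
  | 1, 2, 1, 3, false, 1, false => 2
  | 2, 1, 2, 0, false, 1, false => 2
  | 2, 2, 1, 0, false, 1, false => 2
  | 2, 1, 2, 0, false, 1, true => 2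
  | 2, 2, 1, 0, false, 1, true => 2
  | 2, 1, 2, 0, false, 2, false => 2
  | 2, 2, 1, 0, false, 2, false => 2
  | 2, 1, 2, 0, false, 2, true => 2
  | 2, 2, 1, 0, false, 2, true => 2
  | 2, 1, 2, 1, false, 0, false => 2
  | 2, 2, 1, 1, false, 0, false => 2
  | 2, 1, 2, 1, false, 2, false => 2
  | 2, 2, 1, 1, false, 2, false => 2
  | 2, 1, 2, 3, false, 0, false => 2
  | 2, 2, 1, 3, false, 0, false => 2
  | 2, 1, 2, 3, false, 1, false => 2
  | 2, 2, 1, 3, false, 1, false => 2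
  | 0, 1, 3, 0, false, 1, false => 2
  | 0, 3, 1, 0, false, 1, false => 2
  | 0, 1, 3, 0, false, 2, false => 1
  | 0, 3, 1, 0, false, 2, false => 1
  | 0, 1, 3, 0, false, 3, false => 3
  | 0, 3, 1, 0, false, 3, false => 3
  | 0, 1, 3, 1, false, 0, false => 3
  | 0, 3, 1, 1, false, 0, false => 3
  | 0, 1, 3, 1, false, 2, false => 1
  | 0, 3, 1, 1, false, 2, false => 1
  | 0, 1, 3, 1, true, 0, false => 2
  | 0, 3, 1, 1, true, 0, false => 2
  | 0, 1, 3, 1, true, 2, false => 2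
  | 0, 3, 1, 1, true, 2, false => 2
  | 0, 1, 3, 1, true, 3, true => 2
  | 0, 3, 1, 1, true, 3, true => 2
  | 0, 1, 3, 2, false, 0, false => 3
  | 0, 3, 1, 2, false, 0, false => 3
  | 0, 1, 3, 2, false, 1, false => 2
  | 0, 3, 1, 2, false, 1, false => 2
  | 0, 1, 3, 2, false, 3, false => 1
  | 0, 3, 1, 2, false, 3, false => 1
  | 1, 1, 3, 0, false, 1, false => 3
  | 1, 3, 1, 0, false, 1, false => 3
  | 1, 1, 3, 0, false, 2, false => 3
  | 1, 3, 1, 0, false, 2, false => 3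
  | 1, 1, 3, 0, false, 3, false => 2
  | 1, 3, 1, 0, false, 3, false => 2
  | 1, 1, 3, 0, false, 3, true => 2
  | 1, 3, 1, 0, false, 3, true => 2
  | 1, 1, 3, 1, false, 3, false => 2
  | 1, 3, 1, 1, false, 3, false => 2
  | 1, 1, 3, 1, true, 0, false => 2
  | 1, 3, 1, 1, true, 0, false => 2
  | 1, 1, 3, 1, true, 2, false => 2
  | 1, 3, 1, 1, true, 2, false => 2
  | 1, 1, 3, 1, true, 3, true => 2
  | 1, 3, 1, 1, true, 3, true => 2
  | 1, 1, 3, 2, false, 0, false => 1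
  | 1, 3, 1, 2, false, 0, false => 1
  | 1, 1, 3, 2, false, 1, false => 1
  | 1, 3, 1, 2, false, 1, false => 1
  | 1, 1, 3, 2, false, 3, false => 2
  | 1, 3, 1, 2, false, 3, false => 2
  | 1, 1, 3, 2, false, 3, true => 2
  | 1, 3, 1, 2, false, 3, true => 2
  | 1, 1, 3, 3, false, 0, false => 3
  | 1, 3, 1, 3, false, 0, false => 3
  | 1, 1, 3, 3, false, 1, false => 2
  | 1, 3, 1, 3, false, 1, false => 2
  | 1, 1, 3, 3, false, 2, false => 1
  | 1, 3, 1, 3, false, 2, false => 1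
  | 1, 1, 3, 3, true, 0, false => 2
  | 1, 3, 1, 3, true, 0, false => 2
  | 1, 1, 3, 3, true, 2, false => 2
  | 1, 3, 1, 3, true, 2, false => 2
  | 2, 1, 3, 0, false, 1, false => 1
  | 2, 3, 1, 0, false, 1, false => 1
  | 2, 1, 3, 0, false, 1, true => 2
  | 2, 3, 1, 0, false, 1, true => 2
  | 2, 1, 3, 0, false, 2, false => 1
  | 2, 3, 1, 0, false, 2, false => 1
  | 2, 1, 3, 1, false, 0, false => 2
  | 2, 3, 1, 1, false, 0, false => 2
  | 2, 1, 3, 1, false, 2, false => 2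
  | 2, 3, 1, 1, false, 2, false => 2
  | 2, 1, 3, 2, false, 0, false => 3
  | 2, 3, 1, 2, false, 0, false => 3
  | 2, 1, 3, 2, false, 1, false => 3
  | 2, 3, 1, 2, false, 1, false => 3
  | 2, 1, 3, 2, false, 1, true => 2
  | 2, 3, 1, 2, false, 1, true => 2
  | 2, 1, 3, 3, false, 0, false => 1
  | 2, 3, 1, 3, false, 0, false => 1
  | 2, 1, 3, 3, false, 2, false => 3
  | 2, 3, 1, 3, false, 2, false => 3
  | 2, 1, 3, 3, true, 1, true => 2
  | 2, 3, 1, 3, true, 1, true => 2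
  | 0, 2, 3, 0, false, 1, false => 1
  | 0, 3, 2, 0, false, 1, false => 1
  | 0, 2, 3, 0, false, 2, false => 1
  | 0, 3, 2, 0, false, 2, false => 1
  | 0, 2, 3, 0, false, 2, true => 3
  | 0, 3, 2, 0, false, 2, true => 3
  | 0, 2, 3, 0, false, 3, false => 2
  | 0, 3, 2, 0, false, 3, false => 2
  | 0, 2, 3, 0, false, 3, true => 1
  | 0, 3, 2, 0, false, 3, true => 1
  | 0, 2, 3, 1, false, 0, false => 1
  | 0, 3, 2, 1, false, 0, false => 1
  | 0, 2, 3, 1, false, 2, false => 1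
  | 0, 3, 2, 1, false, 2, false => 1
  | 0, 2, 3, 1, false, 2, true => 3
  | 0, 3, 2, 1, false, 2, true => 3
  | 0, 2, 3, 1, false, 3, false => 2
  | 0, 3, 2, 1, false, 3, false => 2
  | 0, 2, 3, 1, false, 3, true => 3
  | 0, 3, 2, 1, false, 3, true => 3
  | 0, 2, 3, 2, false, 0, false => 1
  | 0, 3, 2, 2, false, 0, false => 1
  | 0, 2, 3, 2, false, 1, false => 1
  | 0, 3, 2, 2, false, 1, false => 1
  | 0, 2, 3, 2, false, 3, false => 2
  | 0, 3, 2, 2, false, 3, false => 2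
  | 0, 2, 3, 2, true, 0, false => 2
  | 0, 3, 2, 2, true, 0, false => 2
  | 1, 2, 3, 0, false, 1, false => 1
  | 1, 3, 2, 0, false, 1, false => 1
  | 1, 2, 3, 0, false, 2, false => 1
  | 1, 3, 2, 0, false, 2, false => 1
  | 1, 2, 3, 0, false, 3, false => 2
  | 1, 3, 2, 0, false, 3, false => 2
  | 1, 2, 3, 0, false, 3, true => 2
  | 1, 3, 2, 0, false, 3, true => 2
  | 1, 2, 3, 1, false, 0, false => 1
  | 1, 3, 2, 1, false, 0, false => 1
  | 1, 2, 3, 1, false, 2, false => 1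
  | 1, 3, 2, 1, false, 2, false => 1
  | 1, 2, 3, 1, false, 2, true => 2
  | 1, 3, 2, 1, false, 2, true => 2
  | 1, 2, 3, 1, false, 3, false => 2
  | 1, 3, 2, 1, false, 3, false => 2
  | 1, 2, 3, 1, false, 3, true => 2
  | 1, 3, 2, 1, false, 3, true => 2
  | 1, 2, 3, 2, false, 0, false => 1
  | 1, 3, 2, 2, false, 0, false => 1
  | 1, 2, 3, 2, false, 1, false => 1
  | 1, 3, 2, 2, false, 1, false => 1
  | 1, 2, 3, 2, false, 3, false => 2
  | 1, 3, 2, 2, false, 3, false => 2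
  | 1, 2, 3, 2, true, 0, false => 3
  | 1, 3, 2, 2, true, 0, false => 3
  | 1, 2, 3, 2, true, 1, false => 3
  | 1, 3, 2, 2, true, 1, false => 3
  | 1, 2, 3, 2, true, 3, true => 2
  | 1, 3, 2, 2, true, 3, true => 2
  | 1, 2, 3, 3, true, 0, false => 1
  | 1, 3, 2, 3, true, 0, false => 1
  | 1, 2, 3, 3, true, 1, false => 3
  | 1, 3, 2, 3, true, 1, false => 3
  | 1, 2, 3, 3, true, 2, true => 2
  | 1, 3, 2, 3, true, 2, true => 2
  | 2, 2, 3, 0, false, 2, true => 3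
  | 2, 3, 2, 0, false, 2, true => 3
  | 2, 2, 3, 0, false, 3, false => 1
  | 2, 3, 2, 0, false, 3, false => 1
  | 2, 2, 3, 0, false, 3, true => 1
  | 2, 3, 2, 0, false, 3, true => 1
  | 2, 2, 3, 1, false, 2, true => 1
  | 2, 3, 2, 1, false, 2, true => 1
  | 2, 2, 3, 1, false, 3, false => 1
  | 2, 3, 2, 1, false, 3, false => 1
  | 2, 2, 3, 1, false, 3, true => 1
  | 2, 3, 2, 1, false, 3, true => 1
  | 2, 2, 3, 2, false, 3, false => 1
  | 2, 3, 2, 2, false, 3, false => 1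
  | 2, 2, 3, 2, true, 0, false => 2
  | 2, 3, 2, 2, true, 0, false => 2
  | 2, 2, 3, 2, true, 1, false => 2
  | 2, 3, 2, 2, true, 1, false => 2
  | 2, 2, 3, 2, true, 3, true => 1
  | 2, 3, 2, 2, true, 3, true => 1
  | 2, 2, 3, 3, false, 0, false => 3
  | 2, 3, 2, 3, false, 0, false => 3
  | 2, 2, 3, 3, false, 1, false => 3
  | 2, 3, 2, 3, false, 1, false => 3
  | 2, 2, 3, 3, false, 2, false => 3
  | 2, 3, 2, 3, false, 2, false => 3
  | 2, 2, 3, 3, true, 1, false => 2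
  | 2, 3, 2, 3, true, 1, false => 2
  | 2, 2, 3, 3, true, 2, true => 1
  | 2, 3, 2, 3, true, 2, true => 1
  | _, _, _, _, _, _, _ => 0

set_option synthInstance.maxSize 2000 in
set_option synthInstance.maxHeartbeats 2000000 in
set_option maxHeartbeats 4000000 in
lemma face_id : ∀ (a b : Fin 4), a ≠ b →
    ∀ (c1 c2 c3 : Fin 4) (b1 b2 b3 : Bool),
    c1 ≠ c2 → c2 ≠ c3 → c1 ≠ c3 →
    (b1 = true → c1 = a ∨ c1 = b) →
    (b2 = true → c2 = a ∨ c2 = b) →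
    (b3 = true → c3 = a ∨ c3 = b) →
    ((c1 = a ∨ c1 = b) → (c2 = a ∨ c2 = b) → b1 = b2) →
    ((c2 = a ∨ c2 = b) → (c3 = a ∨ c3 = b) → b2 = b3) →
    ((c1 = a ∨ c1 = b) → (c3 = a ∨ c3 = b) → b1 = b3) →
    (eps4 (KG a b c1 b1) (KG a b c2 b2) (KG a b c3 b3) - eps4 c1 c2 c3
      = phiT 0 a.val b.val c1.val b1 c2.val b2
        - phiT 1 a.val b.val c3.val b3 c2.val b2
        - phiT 2 a.val b.val c1.val b1 c3.val b3
     ∧ eps4 (KG a b c1 b1) (KG a b c2 b2) (KG a b c3 b3) - eps4 c1 c2 c3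
      = phiT 1 a.val b.val c1.val b1 c2.val b2
        + phiT 2 a.val b.val c2.val b2 c3.val b3
        - phiT 0 a.val b.val c1.val b1 c3.val b3) := by
  decide

lemma sum_range_cast {M : Type*} [AddCommMonoid M] (n : ℕ) [NeZero n] (H : ZMod n → M) :
    ∑ i ∈ Finset.range n, H (i : ZMod n) = ∑ x : ZMod n, H x := by
  rw [← Fin.sum_univ_eq_sum_range (fun i => H (i : ZMod n)) n]
  refine (Fintype.sum_bijective (fun i : Fin n => ((i : ℕ) : ZMod n)) ?_ _ _ (fun i => rfl)).symm.symm
  rw [Fintype.bijective_iff_injective_and_card]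
  constructor
  · intro i j h
    have hi := ZMod.val_cast_of_lt i.isLt
    have hj := ZMod.val_cast_of_lt j.isLt
    exact Fin.ext (by rw [← hi, ← hj]; exact congrArg ZMod.val h)
  · simp [ZMod.card]

lemma shift_sum {M : Type*} [AddCommMonoid M] {r s : ℕ} [NeZero r] [NeZero s]
    (c : ZMod r × ZMod s) (F : ZMod r × ZMod s → M) :
    ∑ x : ZMod r × ZMod s, F (x + c) = ∑ x : ZMod r × ZMod s, F x :=
  Equiv.sum_comp (Equiv.addRight c) F

lemma degRS_cast (r s : ℕ) [NeZero r] [NeZero s] (f : ZMod r × ZMod s → Fin 4) :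
    ((degRS r s f : ℤ) : ZMod 4)
      = ∑ x : ZMod r × ZMod s,
          (eps4 (f x) (f (x + (1,1))) (f (x + (0,1)))
            + eps4 (f x) (f (x + (1,0))) (f (x + (1,1)))) := by
  unfold degRS
  push_cast
  have h1 : ∀ (x : ZMod r × ZMod s),
      (x.1 + 1, x.2 + 1) = x + (1,1) ∧ (x.1, x.2 + 1) = x + (0,1) ∧ (x.1 + 1, x.2) = x + (1,0)
      ∧ (x.1, x.2) = x := by
    intro x
    refine ⟨?_, ?_, ?_, rfl⟩ <;> simp [Prod.ext_iff]
  calc (∑ i ∈ Finset.range r, ∑ j ∈ Finset.range s,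
        (((faceSign (f ((i : ZMod r), (j : ZMod s)))
              (f ((i : ZMod r) + 1, (j : ZMod s) + 1))
              (f ((i : ZMod r), (j : ZMod s) + 1)) : ℤ) : ZMod 4)
          + ((faceSign (f ((i : ZMod r), (j : ZMod s)))
                 (f ((i : ZMod r) + 1, (j : ZMod s)))
                 (f ((i : ZMod r) + 1, (j : ZMod s) + 1)) : ℤ) : ZMod 4)))
      = ∑ a : ZMod r, ∑ b : ZMod s,
        (eps4 (f (a, b)) (f (a + 1, b + 1)) (f (a, b + 1))
          + eps4 (f (a, b)) (f (a + 1, b)) (f (a + 1, b + 1))) := by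
        rw [sum_range_cast r (fun a => ∑ j ∈ Finset.range s,
          (((faceSign (f (a, (j : ZMod s))) (f (a + 1, (j : ZMod s) + 1)) (f (a, (j : ZMod s) + 1)) : ℤ) : ZMod 4)
            + ((faceSign (f (a, (j : ZMod s))) (f (a + 1, (j : ZMod s))) (f (a + 1, (j : ZMod s) + 1)) : ℤ) : ZMod 4)))]
        refine Finset.sum_congr rfl (fun a _ => ?_)
        rw [sum_range_cast s (fun b =>
          (((faceSign (f (a, b)) (f (a + 1, b + 1)) (f (a, b + 1)) : ℤ) : ZMod 4)
            + ((faceSign (f (a, b)) (f (a + 1, b)) (f (a + 1, b + 1)) : ℤ) : ZMod 4)))]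
        refine Finset.sum_congr rfl (fun b _ => ?_)
        rw [epsZ, epsZ]
    _ = ∑ x : ZMod r × ZMod s,
          (eps4 (f x) (f (x + (1,1))) (f (x + (0,1)))
            + eps4 (f x) (f (x + (1,0))) (f (x + (1,1)))) := by
        rw [Fintype.sum_prod_type]
        refine Finset.sum_congr rfl (fun a _ => Finset.sum_congr rfl (fun b _ => ?_))
        obtain ⟨e1, e2, e3, e4⟩ := h1 (a, b)
        rw [← e1, ← e2, ← e3]

/-! ### Adjacency helpers -/

lemma adj_step {r s : ℕ} (x d : ZMod r × ZMod s) (hd : d ∈ hexDirsM r s) (hd0 : d ≠ 0) :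
    (TriRS r s).Adj x (x + d) := by
  refine ⟨fun h => hd0 ?_, by simpa [add_sub_cancel_left] using hd⟩
  have := congrArg (fun y => y - x) h
  simpa using this.symm

section adj
variable {r s : ℕ} (hr : 3 ≤ r) (hs : 3 ≤ s)

lemma one_ne_zero_r (hr : 3 ≤ r) : (1 : ZMod r) ≠ 0 := by
  haveI : Fact (1 < r) := ⟨by omega⟩
  exact one_ne_zero

lemma d10_ne ( hr : 3 ≤ r) : ((1 : ZMod r), (0 : ZMod s)) ≠ 0 :=
  fun h => one_ne_zero_r hr (congrArg Prod.fst h)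

lemma d01_ne (hs : 3 ≤ s) : ((0 : ZMod r), (1 : ZMod s)) ≠ 0 :=
  fun h => one_ne_zero_r hs (congrArg Prod.snd h)

lemma d11_ne (hr : 3 ≤ r) : ((1 : ZMod r), (1 : ZMod s)) ≠ 0 :=
  fun h => one_ne_zero_r hr (congrArg Prod.fst h)

lemma adj10 (hr : 3 ≤ r) (x : ZMod r × ZMod s) : (TriRS r s).Adj x (x + (1, 0)) :=
  adj_step x _ (by simp [hexDirsM]) (d10_ne hr)

lemma adj01 (hs : 3 ≤ s) (x : ZMod r × ZMod s) : (TriRS r s).Adj x (x + (0, 1)) :=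
  adj_step x _ (by simp [hexDirsM]) (d01_ne hs)

lemma adj11 (hr : 3 ≤ r) (x : ZMod r × ZMod s) : (TriRS r s).Adj x (x + (1, 1)) :=
  adj_step x _ (by simp [hexDirsM]) (d11_ne hr)

lemma vshuffle (x : ZMod r × ZMod s) :
    x + (0,1) + (1,0) = x + (1,1) ∧ x + (1,0) + (0,1) = x + (1,1)
      ∧ x - (0,1) + (0,1) = x ∧ x - (0,1) + (1,1) = x + (1,0)
      ∧ x - (1,0) + (1,0) = x ∧ x - (1,0) + (1,1) = x + (0,1) := by
  refine ⟨?_, ?_, ?_, ?_, ?_, ?_⟩ <;>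
    · first
      | (rw [add_assoc]; congr 1; simp [Prod.ext_iff])
      | (rw [sub_eq_add_neg, add_assoc]; congr 1; simp [Prod.ext_iff])

end adj

/-! ### A Kempe step preserves properness and the degree mod 4 -/

lemma kempe_step_key (r s : ℕ) (hr : 3 ≤ r) (hs : 3 ≤ s) (f g : ZMod r × ZMod s → Fin 4)
    (hf : IsProperColoring (TriRS r s) f) (hk : KempeStep (TriRS r s) f g) :
    IsProperColoring (TriRS r s) g ∧
      ((degRS r s g : ℤ) : ZMod 4) = ((degRS r s f : ℤ) : ZMod 4) := by
  haveI : NeZero r := ⟨by omega⟩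
  haveI : NeZero s := ⟨by omega⟩
  classical
  obtain ⟨a, b, hab, C, hg⟩ := hk
  let χ : (ZMod r × ZMod s) → Bool := fun v =>
    if h : f v = a ∨ f v = b then
      decide (((TriRS r s).induce {v | f v = a ∨ f v = b}).connectedComponentMk ⟨v, h⟩ = C)
    else false
  have hχS : ∀ v, χ v = true → f v = a ∨ f v = b := by
    intro v hv
    by_contra h
    simp only [χ, dif_neg h] at hv
    exact Bool.false_ne_true hv
  have hgv : ∀ v, g v = if χ v then Equiv.swap a b (f v) else f v := by
    intro v
    rw [hg v]
    by_cases h : f v = a ∨ f v = b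
    · rw [dif_pos h]
      by_cases hc : ((TriRS r s).induce {v | f v = a ∨ f v = b}).connectedComponentMk ⟨v, h⟩ = C
      · rw [if_pos hc, if_pos (show χ v = true by simp only [χ, dif_pos h]; exact decide_eq_true hc)]
      · rw [if_neg hc, if_neg (show ¬ χ v = true by simp only [χ, dif_pos h]; exact decide_eq_false hc ▸ (by simp))]
    · rw [dif_neg h, if_neg (show ¬ χ v = true by simp only [χ, dif_neg h]; exact Bool.false_ne_true)]
  have hclose : ∀ u v, (TriRS r s).Adj u v → (f u = a ∨ f u = b) → (f v = a ∨ f v = b) →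
      χ u = χ v := by
    intro u v huv hu hv
    have hadj : ((TriRS r s).induce {v | f v = a ∨ f v = b}).Adj ⟨u, hu⟩ ⟨v, hv⟩ := huv
    have hmk := SimpleGraph.ConnectedComponent.sound hadj.reachable
    simp only [χ, dif_pos hu, dif_pos hv, hmk]
  constructor
  · -- properness
    intro u v huv
    rw [hgv u, hgv v]
    by_cases hu : χ u = true <;> by_cases hv : χ v = true
    · rw [if_pos hu, if_pos hv]
      exact fun h => hf huv ((Equiv.swap a b).injective h)
    · rw [if_pos hu, if_neg hv]
      have hfu := hχS u hu
      have hfv : ¬ (f v = a ∨ f v = b) := fun h => hv (hclose u v huv hfu h ▸ hu)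
      push_neg at hfv
      rcases hfu with h | h <;> rw [h] <;> simp [Equiv.swap_apply_left, Equiv.swap_apply_right] <;>
        [exact (hfv.2 ·.symm); exact (hfv.1 ·.symm)]
    · rw [if_neg hu, if_pos hv]
      have hfv := hχS v hv
      have hfu : ¬ (f u = a ∨ f u = b) := fun h => hu (hclose u v huv h hfv ▸ hv)
      push_neg at hfu
      rcases hfv with h | h <;> rw [h] <;> simp [Equiv.swap_apply_left, Equiv.swap_apply_right] <;>
        [exact hfu.2; exact hfu.1]
    · rw [if_neg hu, if_neg hv]; exact hf huv
  · -- degree mod 4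
    rw [degRS_cast, degRS_cast]
    have hgv' : ∀ v, g v = KG a b (f v) (χ v) := by
      intro v
      rw [hgv v, KG]
      by_cases h : χ v = true
      · rw [if_pos h, if_pos h, swap_eq_swc]
      · rw [if_neg h, if_neg h]
    let Φ : ℕ → (ZMod r × ZMod s) → (ZMod r × ZMod s) → ZMod 4 := fun t x y =>
      phiT t a.val b.val (f x).val (χ x) (f y).val (χ y)
    have cell : ∀ x : ZMod r × ZMod s,
        eps4 (g x) (g (x + (1,1))) (g (x + (0,1)))
          + eps4 (g x) (g (x + (1,0))) (g (x + (1,1)))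
        = (eps4 (f x) (f (x + (1,1))) (f (x + (0,1)))
            + eps4 (f x) (f (x + (1,0))) (f (x + (1,1))))
          + ((Φ 1 x (x + (1,0)) - Φ 1 (x + (0,1)) ((x + (0,1)) + (1,0)))
            + (Φ 2 (x + (1,0)) ((x + (1,0)) + (0,1)) - Φ 2 x (x + (0,1)))) := by
      intro x
      obtain ⟨e1, e2, _, _, _, _⟩ := vshuffle (r := r) (s := s) x
      have a01 := hf (adj01 hs x)
      have a10 := hf (adj10 hr x)
      have a11 := hf (adj11 hr x)
      have a01_11 : f (x + (0,1)) ≠ f (x + (1,1)) := by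
        have := hf (adj10 hr (x + (0,1))); rwa [e1] at this
      have a10_11 : f (x + (1,0)) ≠ f (x + (1,1)) := by
        have := hf (adj01 hs (x + (1,0))); rwa [e2] at this
      have cl_0_11 : _ := hclose x (x + (1,1)) (adj11 hr x)
      have cl_0_01 : _ := hclose x (x + (0,1)) (adj01 hs x)
      have cl_0_10 : _ := hclose x (x + (1,0)) (adj10 hr x)
      have cl_01_11 : (f (x+(0,1)) = a ∨ f (x+(0,1)) = b) → (f (x+(1,1)) = a ∨ f (x+(1,1)) = b) →
          χ (x + (0,1)) = χ (x + (1,1)) := by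
        intro h1 h2
        have := hclose (x + (0,1)) (x + (1,1)) (by have := adj10 hr (x + (0,1)); rwa [e1] at this) h1 h2
        exact this
      have cl_10_11 : (f (x+(1,0)) = a ∨ f (x+(1,0)) = b) → (f (x+(1,1)) = a ∨ f (x+(1,1)) = b) →
          χ (x + (1,0)) = χ (x + (1,1)) := by
        intro h1 h2
        exact hclose (x + (1,0)) (x + (1,1)) (by have := adj01 hs (x + (1,0)); rwa [e2] at this) h1 h2
      obtain ⟨hU, -⟩ := face_id a b hab (f x) (f (x + (1,1))) (f (x + (0,1)))
        (χ x) (χ (x + (1,1))) (χ (x + (0,1)))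
        a11 (fun h => a01_11 h.symm) a01
        (hχS _) (hχS _) (hχS _)
        (cl_0_11) (fun h1 h2 => (cl_01_11 h2 h1).symm) (cl_0_01)
      obtain ⟨-, hD⟩ := face_id a b hab (f x) (f (x + (1,0))) (f (x + (1,1)))
        (χ x) (χ (x + (1,0))) (χ (x + (1,1)))
        a10 a10_11 a11
        (hχS _) (hχS _) (hχS _)
        (cl_0_10) (cl_10_11) (cl_0_11)
      rw [hgv' x, hgv' (x + (1,1)), hgv' (x + (0,1)), hgv' (x + (1,0))]
      have hU' := sub_eq_iff_eq_add.mp hU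
      have hD' := sub_eq_iff_eq_add.mp hD
      rw [hU', hD']
      simp only [Φ, e1, e2]
      ring
    calc (∑ x : ZMod r × ZMod s,
            (eps4 (g x) (g (x + (1,1))) (g (x + (0,1)))
              + eps4 (g x) (g (x + (1,0))) (g (x + (1,1)))))
        = (∑ x : ZMod r × ZMod s,
            (eps4 (f x) (f (x + (1,1))) (f (x + (0,1)))
              + eps4 (f x) (f (x + (1,0))) (f (x + (1,1)))))
          + ((∑ x : ZMod r × ZMod s, Φ 1 x (x + (1,0)))
              - (∑ x : ZMod r × ZMod s, Φ 1 (x + (0,1)) ((x + (0,1)) + (1,0))))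
          + ((∑ x : ZMod r × ZMod s, Φ 2 (x + (1,0)) ((x + (1,0)) + (0,1)))
              - (∑ x : ZMod r × ZMod s, Φ 2 x (x + (0,1)))) := by
          rw [Finset.sum_congr rfl (fun x _ => cell x)]
          simp only [Finset.sum_add_distrib, Finset.sum_sub_distrib]
          ring
      _ = ∑ x : ZMod r × ZMod s,
            (eps4 (f x) (f (x + (1,1))) (f (x + (0,1)))
              + eps4 (f x) (f (x + (1,0))) (f (x + (1,1)))) := by
          rw [shift_sum ((0 : ZMod r), (1 : ZMod s)) (fun y => Φ 1 y (y + (1,0))),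
            shift_sum ((1 : ZMod r), (0 : ZMod s)) (fun y => Φ 2 y (y + (0,1)))]
          ring

/-! ### Parity analysis of `cns` -/

def col (p q : ℕ) : Fin 4 :=
  if p % 2 = 1 then (if q % 2 = 1 then 0 else 1) else (if q % 2 = 1 then 2 else 3)

lemma cns_eq_col {r s : ℕ} (x : ZMod r × ZMod s) : cns r s x = col (x.1.val) (x.2.val) := rfl

lemma col_congr {p q p' q' : ℕ} (h1 : p % 2 = p' % 2) (h2 : q % 2 = q' % 2) :
    col p q = col p' q' := by unfold col; rw [h1, h2]

lemma val_add_one_mod {n : ℕ} [NeZero n] (hn : 2 ∣ n) (x : ZMod n) :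
    ((x + 1).val) % 2 = (x.val + 1) % 2 := by
  have h1 : x + 1 = ((x.val + 1 : ℕ) : ZMod n) := by
    push_cast [ZMod.natCast_val, ZMod.cast_id]
    ring
  rw [h1, ZMod.val_natCast, Nat.mod_mod_of_dvd _ hn]

lemma val_sub_one_mod {n : ℕ} [NeZero n] (hn : 2 ∣ n) (x : ZMod n) :
    ((x - 1).val) % 2 = (x.val + 1) % 2 := by
  have := val_add_one_mod hn (x - 1)
  rw [sub_add_cancel] at this
  omega

lemma colstep : ∀ p q : ℕ,
    col p q ≠ col (p + 1) q ∧ col p q ≠ col p (q + 1) ∧ col p q ≠ col (p + 1) (q + 1)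
      ∧ col p (q + 1) ≠ col (p + 1) q := by
  intro p q
  unfold col
  rcases Nat.mod_two_eq_zero_or_one p with h | h <;>
    rcases Nat.mod_two_eq_zero_or_one q with h' | h' <;>
    · have e1 : (p + 1) % 2 = 1 - p % 2 := by omega
      have e2 : (q + 1) % 2 = 1 - q % 2 := by omega
      rw [e1, e2, h, h']
      refine ⟨by decide, by decide, by decide, by decide⟩

section cnssec
variable {r s : ℕ} [NeZero r] [NeZero s]

lemma colP (hr : 2 ∣ r) (hs : 2 ∣ s) (x : ZMod r × ZMod s) :
    cns r s (x + (1,1)) = col (x.1.val + 1) (x.2.val + 1)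
    ∧ cns r s (x + (1,0)) = col (x.1.val + 1) x.2.val
    ∧ cns r s (x + (0,1)) = col x.1.val (x.2.val + 1)
    ∧ cns r s (x - (1,1)) = col (x.1.val + 1) (x.2.val + 1)
    ∧ cns r s (x - (1,0)) = col (x.1.val + 1) x.2.val
    ∧ cns r s (x - (0,1)) = col x.1.val (x.2.val + 1) := by
  have h10 : ∀ y : ZMod s, ((y + 0).val) % 2 = y.val % 2 := fun y => by rw [add_zero]
  have h10' : ∀ y : ZMod r, ((y + 0).val) % 2 = y.val % 2 := fun y => by rw [add_zero]
  have h20 : ∀ y : ZMod s, ((y - 0).val) % 2 = y.val % 2 := fun y => by rw [sub_zero]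
  have h20' : ∀ y : ZMod r, ((y - 0).val) % 2 = y.val % 2 := fun y => by rw [sub_zero]
  exact ⟨col_congr (val_add_one_mod hr x.1) (val_add_one_mod hs x.2),
    col_congr (val_add_one_mod hr x.1) (h10 x.2),
    col_congr (h10' x.1) (val_add_one_mod hs x.2),
    col_congr (val_sub_one_mod hr x.1) (val_sub_one_mod hs x.2),
    col_congr (val_sub_one_mod hr x.1) (h20 x.2),
    col_congr (h20' x.1) (val_sub_one_mod hs x.2)⟩

lemma cns_proper (hr : 2 ∣ r) (hs : 2 ∣ s) : IsProperColoring (TriRS r s) (cns r s) := by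
  rintro u v ⟨hne, hd⟩
  obtain ⟨c1, c2, c3, c4, c5, c6⟩ := colP hr hs u
  have n1 : u + ((-1 : ZMod r), (0 : ZMod s)) = u - (1, 0) := by
    simp [Prod.ext_iff, sub_eq_add_neg]
  have n2 : u + ((0 : ZMod r), (-1 : ZMod s)) = u - (0, 1) := by
    simp [Prod.ext_iff, sub_eq_add_neg]
  have n3 : u + ((-1 : ZMod r), (-1 : ZMod s)) = u - (1, 1) := by
    simp [Prod.ext_iff, sub_eq_add_neg]
  simp only [hexDirsM, Set.mem_insert_iff, Set.mem_singleton_iff] at hd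
  rcases hd with h | h | h | h | h | h <;> rw [sub_eq_iff_eq_add'.mp h, cns_eq_col u]
  · rw [c2]; exact (colstep u.1.val u.2.val).1
  · rw [n1, c5]; exact (colstep u.1.val u.2.val).1
  · rw [c3]; exact (colstep u.1.val u.2.val).2.1
  · rw [n2, c6]; exact (colstep u.1.val u.2.val).2.1
  · rw [c1]; exact (colstep u.1.val u.2.val).2.2.1
  · rw [n3, c4]; exact (colstep u.1.val u.2.val).2.2.1

lemma cns_nonsingular (hr : 2 ∣ r) (hs : 2 ∣ s) : NonSingularRS r s (cns r s) := by
  intro x d hd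
  obtain ⟨c1, c2, c3, c4, c5, c6⟩ := colP hr hs x
  fin_cases hd
  · rw [show apexRS r s x (1,0) = (x + (1,1), x - (0,1)) from by simp [apexRS, Prod.ext_iff]]
    rw [c1, c6]
    exact (colstep x.1.val (x.2.val + 1)).1.symm
  · rw [show apexRS r s x (-1,0) = (x + (0,1), x - (1,1)) from by simp [apexRS, Prod.ext_iff]]
    rw [c3, c4]
    exact (colstep x.1.val (x.2.val + 1)).1
  · rw [show apexRS r s x (0,1) = (x + (1,1), x - (1,0)) from by simp [apexRS, Prod.ext_iff]]
    rw [c1, c5]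
    exact (colstep (x.1.val + 1) x.2.val).2.1.symm
  · rw [show apexRS r s x (0,-1) = (x + (1,0), x - (1,1)) from by simp [apexRS, Prod.ext_iff]]
    rw [c2, c4]
    exact (colstep (x.1.val + 1) x.2.val).2.1
  · rw [show apexRS r s x (1,1) = (x + (0,1), x + (1,0)) from by simp [apexRS, Prod.ext_iff]]
    rw [c3, c2]
    exact (colstep x.1.val x.2.val).2.2.2
  · rw [show apexRS r s x (-1,-1) = (x - (1,0), x - (0,1)) from by simp [apexRS, Prod.ext_iff]]
    rw [c5, c6]
    exact (colstep x.1.val x.2.val).2.2.2.symm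

end cnssec

/-! ### The degree of `cns` -/

lemma sum_mod2 (h : ℕ → ℤ) (k : ℕ) :
    ∑ j ∈ Finset.range (2 * k), h (j % 2) = k * (h 0 + h 1) := by
  induction k with
  | zero => simp
  | succ k ih =>
    rw [show 2 * (k + 1) = 2 * k + 1 + 1 from by ring, Finset.sum_range_succ,
      Finset.sum_range_succ, ih, show (2 * k + 1) % 2 = 1 from by omega,
      show (2 * k) % 2 = 0 from by omega]
    push_cast
    ring

lemma colcell : ∀ i j : ℕ,
    faceSign (col i j) (col (i+1) (j+1)) (col i (j+1))
      + faceSign (col i j) (col (i+1) j) (col (i+1) (j+1))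
    = if i % 2 = j % 2 then 0 else 1 := by
  intro i j
  have e1 : (i + 1) % 2 = 1 - i % 2 := by omega
  have e2 : (j + 1) % 2 = 1 - j % 2 := by omega
  rcases Nat.mod_two_eq_zero_or_one i with h | h <;>
    rcases Nat.mod_two_eq_zero_or_one j with h' | h' <;>
    · simp only [col, e1, e2, h, h']
      decide

lemma cns_deg (l m : ℕ) (hl : 1 ≤ l) (hm : 1 ≤ m) :
    degRS (6*l) (6*m) (cns (6*l) (6*m)) = ((18*l*m : ℕ) : ℤ) := by
  haveI : NeZero (6*l) := ⟨by omega⟩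
  haveI : NeZero (6*m) := ⟨by omega⟩
  have hr : 2 ∣ 6*l := ⟨3*l, by ring⟩
  have hs : 2 ∣ 6*m := ⟨3*m, by ring⟩
  have valp : ∀ (n : ℕ) (hn : 2 ∣ n), ∀ [NeZero n], ∀ i : ℕ, ((i : ZMod n)).val % 2 = i % 2 := by
    intro n hn _ i
    rw [ZMod.val_natCast, Nat.mod_mod_of_dvd _ hn]
  have hcast : ∀ (n : ℕ), ∀ [NeZero n], ∀ i : ℕ, ((i : ZMod n) + 1) = ((i + 1 : ℕ) : ZMod n) := by
    intro n _ i; push_cast; ring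
  unfold degRS
  have hcell : ∀ i j : ℕ,
      (faceSign (cns (6*l) (6*m) ((i : ZMod (6*l)), (j : ZMod (6*m))))
          (cns (6*l) (6*m) ((i : ZMod (6*l)) + 1, (j : ZMod (6*m)) + 1))
          (cns (6*l) (6*m) ((i : ZMod (6*l)), (j : ZMod (6*m)) + 1))
        + faceSign (cns (6*l) (6*m) ((i : ZMod (6*l)), (j : ZMod (6*m))))
            (cns (6*l) (6*m) ((i : ZMod (6*l)) + 1, (j : ZMod (6*m))))
            (cns (6*l) (6*m) ((i : ZMod (6*l)) + 1, (j : ZMod (6*m)) + 1)))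
      = if i % 2 = j % 2 then 0 else 1 := by
    intro i j
    rw [← colcell i j]
    rw [cns_eq_col, cns_eq_col, cns_eq_col, cns_eq_col, hcast, hcast]
    rw [col_congr (valp _ hr i) (valp _ hs j),
      col_congr (valp _ hr (i+1)) (valp _ hs (j+1)),
      col_congr (valp _ hr i) (valp _ hs (j+1)),
      col_congr (valp _ hr (i+1)) (valp _ hs j)]
  calc (∑ i ∈ Finset.range (6*l), ∑ j ∈ Finset.range (6*m),
        (faceSign (cns (6*l) (6*m) ((i : ZMod (6*l)), (j : ZMod (6*m))))
          (cns (6*l) (6*m) ((i : ZMod (6*l)) + 1, (j : ZMod (6*m)) + 1))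
          (cns (6*l) (6*m) ((i : ZMod (6*l)), (j : ZMod (6*m)) + 1))
        + faceSign (cns (6*l) (6*m) ((i : ZMod (6*l)), (j : ZMod (6*m))))
            (cns (6*l) (6*m) ((i : ZMod (6*l)) + 1, (j : ZMod (6*m))))
            (cns (6*l) (6*m) ((i : ZMod (6*l)) + 1, (j : ZMod (6*m)) + 1))))
      = ∑ i ∈ Finset.range (6*l), ∑ j ∈ Finset.range (6*m),
          (if i % 2 = j % 2 then (0:ℤ) else 1) := by
        exact Finset.sum_congr rfl (fun i _ => Finset.sum_congr rfl (fun j _ => hcell i j))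
    _ = ∑ i ∈ Finset.range (6*l), ((3*m : ℕ) : ℤ) := by
        refine Finset.sum_congr rfl (fun i _ => ?_)
        rw [show 6*m = 2*(3*m) from by ring,
          sum_mod2 (fun t => if i % 2 = t then (0:ℤ) else 1) (3*m)]
        rcases Nat.mod_two_eq_zero_or_one i with h | h <;> rw [h] <;> norm_num
    _ = ((18*l*m : ℕ) : ℤ) := by
        rw [Finset.sum_const, Finset.card_range]
        push_cast
        ring

/-! ### The diagonal 3-coloring, with degree 0 -/

def tc (r s : ℕ) : ZMod r × ZMod s → Fin 4 := fun x => ⟨(x.1.val + x.2.val) % 3, by omega⟩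

def f3 (t : ℕ) : Fin 4 := ⟨t % 3, by omega⟩

lemma val_add_one_mod3 {n : ℕ} [NeZero n] (hn : 3 ∣ n) (x : ZMod n) :
    ((x + 1).val) % 3 = (x.val + 1) % 3 := by
  have h1 : x + 1 = ((x.val + 1 : ℕ) : ZMod n) := by
    push_cast [ZMod.natCast_val, ZMod.cast_id]
    ring
  rw [h1, ZMod.val_natCast, Nat.mod_mod_of_dvd _ hn]

lemma val_sub_one_mod3 {n : ℕ} [NeZero n] (hn : 3 ∣ n) (x : ZMod n) :
    ((x - 1).val) % 3 = (x.val + 2) % 3 := by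
  have := val_add_one_mod3 hn (x - 1)
  rw [sub_add_cancel] at this
  omega

section tcsec
variable {r s : ℕ} [NeZero r] [NeZero s]

lemma tc_proper (hr : 3 ∣ r) (hs : 3 ∣ s) : IsProperColoring (TriRS r s) (tc r s) := by
  rintro u v ⟨hne, hd⟩
  have n1 : u + ((-1 : ZMod r), (0 : ZMod s)) = u - (1, 0) := by
    simp [Prod.ext_iff, sub_eq_add_neg]
  have n2 : u + ((0 : ZMod r), (-1 : ZMod s)) = u - (0, 1) := by
    simp [Prod.ext_iff, sub_eq_add_neg]
  have n3 : u + ((-1 : ZMod r), (-1 : ZMod s)) = u - (1, 1) := by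
    simp [Prod.ext_iff, sub_eq_add_neg]
  simp only [hexDirsM, Set.mem_insert_iff, Set.mem_singleton_iff] at hd
  have key : ∀ w : ZMod r × ZMod s,
      (w.1.val % 3 = (u.1.val + 1) % 3 ∧ w.2.val % 3 = u.2.val % 3)
      ∨ (w.1.val % 3 = (u.1.val + 2) % 3 ∧ w.2.val % 3 = u.2.val % 3)
      ∨ (w.1.val % 3 = u.1.val % 3 ∧ w.2.val % 3 = (u.2.val + 1) % 3)
      ∨ (w.1.val % 3 = u.1.val % 3 ∧ w.2.val % 3 = (u.2.val + 2) % 3)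
      ∨ (w.1.val % 3 = (u.1.val + 1) % 3 ∧ w.2.val % 3 = (u.2.val + 1) % 3)
      ∨ (w.1.val % 3 = (u.1.val + 2) % 3 ∧ w.2.val % 3 = (u.2.val + 2) % 3)
      → tc r s u ≠ tc r s w := by
    intro w hw heq
    have hval := congrArg Fin.val heq
    have : (u.1.val + u.2.val) % 3 = (w.1.val + w.2.val) % 3 := hval
    omega
  rcases hd with h | h | h | h | h | h <;> rw [sub_eq_iff_eq_add'.mp h]
  · exact key _ (Or.inl ⟨val_add_one_mod3 hr u.1, by show (u.2 + 0).val % 3 = u.2.val % 3; rw [add_zero]⟩)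
  · rw [n1]
    exact key _ (Or.inr (Or.inl ⟨val_sub_one_mod3 hr u.1, by show (u.2 - 0).val % 3 = u.2.val % 3; rw [sub_zero]⟩))
  · exact key _ (Or.inr (Or.inr (Or.inl ⟨by show (u.1 + 0).val % 3 = u.1.val % 3; rw [add_zero], val_add_one_mod3 hs u.2⟩)))
  · rw [n2]
    exact key _ (Or.inr (Or.inr (Or.inr (Or.inl ⟨by show (u.1 - 0).val % 3 = u.1.val % 3; rw [sub_zero], val_sub_one_mod3 hs u.2⟩))))
  · exact key _ (Or.inr (Or.inr (Or.inr (Or.inr (Or.inl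
      ⟨val_add_one_mod3 hr u.1, val_add_one_mod3 hs u.2⟩)))))
  · rw [n3]
    exact key _ (Or.inr (Or.inr (Or.inr (Or.inr (Or.inr
      ⟨val_sub_one_mod3 hr u.1, val_sub_one_mod3 hs u.2⟩)))))

lemma f3cell : ∀ A : ℕ,
    faceSign (f3 A) (f3 (A+2)) (f3 (A+1)) + faceSign (f3 A) (f3 (A+1)) (f3 (A+2)) = 0 := by
  intro A
  have h3 : A % 3 = 0 ∨ A % 3 = 1 ∨ A % 3 = 2 := by omega
  rcases h3 with h | h | h
  · rw [show f3 A = (0 : Fin 4) from Fin.ext (by simpa [f3] using h),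
      show f3 (A+2) = (2 : Fin 4) from Fin.ext (by show (A+2) % 3 = 2; omega),
      show f3 (A+1) = (1 : Fin 4) from Fin.ext (by show (A+1) % 3 = 1; omega)]
    decide
  · rw [show f3 A = (1 : Fin 4) from Fin.ext (by simpa [f3] using h),
      show f3 (A+2) = (0 : Fin 4) from Fin.ext (by show (A+2) % 3 = 0; omega),
      show f3 (A+1) = (2 : Fin 4) from Fin.ext (by show (A+1) % 3 = 2; omega)]
    decide
  · rw [show f3 A = (2 : Fin 4) from Fin.ext (by simpa [f3] using h),
      show f3 (A+2) = (1 : Fin 4) from Fin.ext (by show (A+2) % 3 = 1; omega),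
      show f3 (A+1) = (0 : Fin 4) from Fin.ext (by show (A+1) % 3 = 0; omega)]
    decide

lemma tc_deg (hr : 3 ∣ r) (hs : 3 ∣ s) : degRS r s (tc r s) = 0 := by
  have hcast : ∀ (n : ℕ), ∀ [NeZero n], ∀ i : ℕ, ((i : ZMod n) + 1) = ((i + 1 : ℕ) : ZMod n) := by
    intro n _ i; push_cast; ring
  have hval : ∀ i j : ℕ, tc r s ((i : ZMod r), (j : ZMod s)) = f3 (i + j) := by
    intro i j
    refine Fin.ext ?_
    show ((i : ZMod r).val + (j : ZMod s).val) % 3 = (i + j) % 3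
    rw [ZMod.val_natCast, ZMod.val_natCast]
    have d1 : (i % r) % 3 = i % 3 := Nat.mod_mod_of_dvd i hr
    have d2 : (j % s) % 3 = j % 3 := Nat.mod_mod_of_dvd j hs
    omega
  unfold degRS
  refine Finset.sum_eq_zero (fun i _ => Finset.sum_eq_zero (fun j _ => ?_))
  rw [hcast, hcast, hval i j, hval (i+1) (j+1), hval i (j+1), hval (i+1) j]
  rw [show (i+1) + (j+1) = (i+j) + 2 from by ring, show i + (j+1) = (i+j) + 1 from by ring,
    show (i+1) + j = (i+j) + 1 from by ring]
  exact f3cell (i+j)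

end tcsec

/-! ### Klein group machinery for the forward direction -/

def iot : Fin 4 → ZMod 2 × ZMod 2 := ![(0,0), (0,1), (1,0), (1,1)]

lemma iot_inj : ∀ c d : Fin 4, iot c = iot d → c = d := by decide

lemma key4 : ∀ a b c d : Fin 4, a ≠ b → c ≠ a → c ≠ b → d ≠ a → d ≠ b → c ≠ d →
    iot c + iot d = iot a + iot b := by decide

lemma kadd : ∀ p q u v t : ZMod 2 × ZMod 2, u + q = p + v → v + t = p + q → u = t := by decide

lemma kadd2 : ∀ p q u v t : ZMod 2 × ZMod 2, q + u = p + v → v + t = p + q → u = t := by decide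

lemma ns_period (r s : ℕ) (hr : 3 ≤ r) (hs : 3 ≤ s) (f : ZMod r × ZMod s → Fin 4)
    (hf : IsProperColoring (TriRS r s) f) (hns : NonSingularRS r s f) :
    (∀ x : ZMod r × ZMod s, f (x + (0,1)) = f (x - (0,1)))
      ∧ (∀ x : ZMod r × ZMod s, f (x + (1,0)) = f (x - (1,0))) := by
  have E : ∀ x : ZMod r × ZMod s,
      (iot (f (x + (0,1))) + iot (f (x + (1,0))) = iot (f x) + iot (f (x + (1,1))))
      ∧ (iot (f (x + (1,1))) + iot (f (x - (0,1))) = iot (f x) + iot (f (x + (1,0))))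
      ∧ (iot (f (x + (1,1))) + iot (f (x - (1,0))) = iot (f x) + iot (f (x + (0,1)))) := by
    intro x
    obtain ⟨e1, e2, e3, e4, e5, e6⟩ := vshuffle (r := r) (s := s) x
    have a01 := hf (adj01 hs x)
    have a10 := hf (adj10 hr x)
    have a11 := hf (adj11 hr x)
    have a01_11 : f (x + (0,1)) ≠ f (x + (1,1)) := by
      have := hf (adj10 hr (x + (0,1))); rwa [e1] at this
    have a10_11 : f (x + (1,0)) ≠ f (x + (1,1)) := by
      have := hf (adj01 hs (x + (1,0))); rwa [e2] at this
    have am01_0 : f (x - (0,1)) ≠ f x := by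
      have := hf (adj01 hs (x - (0,1))); rwa [e3] at this
    have am01_10 : f (x - (0,1)) ≠ f (x + (1,0)) := by
      have := hf (adj11 hr (x - (0,1))); rwa [e4] at this
    have am10_0 : f (x - (1,0)) ≠ f x := by
      have := hf (adj10 hr (x - (1,0))); rwa [e5] at this
    have am10_01 : f (x - (1,0)) ≠ f (x + (0,1)) := by
      have := hf (adj11 hr (x - (1,0))); rwa [e6] at this
    have hns11 := hns x (1,1) (by decide)
    rw [show apexRS r s x (1,1) = (x + (0,1), x + (1,0)) from by simp [apexRS, Prod.ext_iff]] at hns11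
    have hns10 := hns x (1,0) (by decide)
    rw [show apexRS r s x (1,0) = (x + (1,1), x - (0,1)) from by simp [apexRS, Prod.ext_iff]] at hns10
    have hns01 := hns x (0,1) (by decide)
    rw [show apexRS r s x (0,1) = (x + (1,1), x - (1,0)) from by simp [apexRS, Prod.ext_iff]] at hns01
    refine ⟨key4 (f x) (f (x + (1,1))) _ _ a11 a01.symm a01_11 a10.symm a10_11 hns11, ?_, ?_⟩
    · exact key4 (f x) (f (x + (1,0))) _ _ a10 a11.symm (fun h => a10_11 h.symm)
        am01_0 am01_10 hns10
    · exact key4 (f x) (f (x + (0,1))) _ _ a01 a11.symm (fun h => a01_11 h.symm)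
        am10_0 am10_01 hns01
  constructor
  · intro x
    obtain ⟨E1, E2, _⟩ := E x
    exact iot_inj _ _ (kadd (iot (f x)) (iot (f (x + (1,0)))) _ (iot (f (x + (1,1)))) _ E1 E2)
  · intro x
    obtain ⟨E1, _, E3⟩ := E x
    exact iot_inj _ _ (kadd2 (iot (f x)) (iot (f (x + (0,1)))) _ (iot (f (x + (1,1)))) _ E1 E3)

/-! ### Periodicity forces even side lengths -/

lemma period_even_vert (r s : ℕ) (hr : 3 ≤ r) (hs : 3 ≤ s) (f : ZMod r × ZMod s → Fin 4)
    (hf : IsProperColoring (TriRS r s) f)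
    (hvert : ∀ x : ZMod r × ZMod s, f (x + (0,1)) = f (x - (0,1))) : Even s := by
  haveI : NeZero r := ⟨by omega⟩
  haveI : NeZero s := ⟨by omega⟩
  by_contra hodd
  have hs1 : s % 2 = 1 := Nat.odd_iff.mp (Nat.not_even_iff_odd.mp hodd)
  have two : ∀ w : ZMod r × ZMod s, f (w + ((0 : ZMod r), (2 : ZMod s))) = f w := by
    intro w
    have h := hvert (w + (0,1))
    rw [add_sub_cancel_right] at h
    rw [← h]
    congr 1
    rw [add_assoc]
    congr 1
    norm_num [Prod.ext_iff]
  have iter : ∀ k : ℕ, ∀ w : ZMod r × ZMod s,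
      f (w + ((0 : ZMod r), ((2*k : ℕ) : ZMod s))) = f w := by
    intro k
    induction k with
    | zero => intro w; norm_num; rw [show ((0:ZMod r),(0:ZMod s)) = 0 from rfl, add_zero]
    | succ k ih =>
      intro w
      have e : ((2*(k+1) : ℕ) : ZMod s) = ((2*k : ℕ) : ZMod s) + 2 := by push_cast; ring
      rw [e, show ((0:ZMod r), ((2*k : ℕ) : ZMod s) + 2)
          = ((0:ZMod r), ((2*k : ℕ) : ZMod s)) + ((0:ZMod r), (2:ZMod s)) from by
        norm_num [Prod.ext_iff], ← add_assoc, two, ih]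
  have hone : ((2 * ((s+1)/2) : ℕ) : ZMod s) = 1 := by
    rw [show 2 * ((s+1)/2) = s + 1 from by omega]
    push_cast [ZMod.natCast_self]
    ring
  have hper := iter ((s+1)/2) 0
  rw [hone] at hper
  exact hf (adj01 hs (0 : ZMod r × ZMod s)) hper.symm

lemma period_even_horiz (r s : ℕ) (hr : 3 ≤ r) (hs : 3 ≤ s) (f : ZMod r × ZMod s → Fin 4)
    (hf : IsProperColoring (TriRS r s) f)
    (hhoriz : ∀ x : ZMod r × ZMod s, f (x + (1,0)) = f (x - (1,0))) : Even r := by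
  haveI : NeZero r := ⟨by omega⟩
  haveI : NeZero s := ⟨by omega⟩
  by_contra hodd
  have hr1 : r % 2 = 1 := Nat.odd_iff.mp (Nat.not_even_iff_odd.mp hodd)
  have two : ∀ w : ZMod r × ZMod s, f (w + ((2 : ZMod r), (0 : ZMod s))) = f w := by
    intro w
    have h := hhoriz (w + (1,0))
    rw [add_sub_cancel_right] at h
    rw [← h]
    congr 1
    rw [add_assoc]
    congr 1
    norm_num [Prod.ext_iff]
  have iter : ∀ k : ℕ, ∀ w : ZMod r × ZMod s,
      f (w + (((2*k : ℕ) : ZMod r), (0 : ZMod s))) = f w := by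
    intro k
    induction k with
    | zero => intro w; norm_num; rw [show ((0:ZMod r),(0:ZMod s)) = 0 from rfl, add_zero]
    | succ k ih =>
      intro w
      have e : ((2*(k+1) : ℕ) : ZMod r) = ((2*k : ℕ) : ZMod r) + 2 := by push_cast; ring
      rw [e, show (((2*k : ℕ) : ZMod r) + 2, (0:ZMod s))
          = (((2*k : ℕ) : ZMod r), (0:ZMod s)) + ((2:ZMod r), (0:ZMod s)) from by
        norm_num [Prod.ext_iff], ← add_assoc, two, ih]
  have hone : ((2 * ((r+1)/2) : ℕ) : ZMod r) = 1 := by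
    rw [show 2 * ((r+1)/2) = r + 1 from by omega]
    push_cast [ZMod.natCast_self]
    ring
  have hper := iter ((r+1)/2) 0
  rw [hone] at hper
  exact hf (adj10 hr (0 : ZMod r × ZMod s)) hper.symm

/-! ### The degree mod 4 is a Kempe invariant -/

lemma kempe_equiv_inv (r s : ℕ) (hr : 3 ≤ r) (hs : 3 ≤ s) (f g : ZMod r × ZMod s → Fin 4)
    (hf : IsProperColoring (TriRS r s) f) (h : KempeEquiv (TriRS r s) f g) :
    IsProperColoring (TriRS r s) g ∧
      ((degRS r s g : ℤ) : ZMod 4) = ((degRS r s f : ℤ) : ZMod 4) := by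
  induction h with
  | refl => exact ⟨hf, rfl⟩
  | tail h1 h2 ih =>
    obtain ⟨hb, hd⟩ := ih
    have hkey := kempe_step_key r s hr hs _ _ hb h2
    exact ⟨hkey.1, hkey.2.trans hd⟩

/-! ### Main theorem -/

/-- T(3L,3M) has a non-singular proper 4-coloring iff `L` and `M` are both
even; if `L = 2ℓ` and `M = 2m` then `c_ns` is such a coloring of T(6ℓ,6m) with
`|deg c_ns| = 18ℓm`, and if moreover `ℓ` and `m` are odd then T(6ℓ,6m) has two
proper 4-colorings that are not Kempe equivalent. -/
theorem nonsingular_coloring (L M : ℕ) (hL : 1 ≤ L) (hM : 1 ≤ M) :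
    ((∃ f : ZMod (3 * L) × ZMod (3 * M) → Fin 4,
        IsProperColoring (TriRS (3 * L) (3 * M)) f ∧
        NonSingularRS (3 * L) (3 * M) f) ↔ (Even L ∧ Even M)) ∧
    (∀ l m : ℕ, L = 2 * l → M = 2 * m →
      IsProperColoring (TriRS (6 * l) (6 * m)) (cns (6 * l) (6 * m)) ∧
      NonSingularRS (6 * l) (6 * m) (cns (6 * l) (6 * m)) ∧
      (degRS (6 * l) (6 * m) (cns (6 * l) (6 * m))).natAbs = 18 * l * m ∧
      (Odd l → Odd m →
        ∃ f g : ZMod (6 * l) × ZMod (6 * m) → Fin 4,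
          IsProperColoring (TriRS (6 * l) (6 * m)) f ∧
          IsProperColoring (TriRS (6 * l) (6 * m)) g ∧
          ¬ KempeEquiv (TriRS (6 * l) (6 * m)) f g)) := by
  have hr3 : 3 ≤ 3 * L := by omega
  have hs3 : 3 ≤ 3 * M := by omega
  haveI : NeZero (3 * L) := ⟨by omega⟩
  haveI : NeZero (3 * M) := ⟨by omega⟩
  constructor
  · constructor
    · rintro ⟨f, hf, hns⟩
      obtain ⟨hvert, hhoriz⟩ := ns_period _ _ hr3 hs3 f hf hns
      have hevs := period_even_vert _ _ hr3 hs3 f hf hvert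
      have hevr := period_even_horiz _ _ hr3 hs3 f hf hhoriz
      have h1 := Nat.even_iff.mp hevr
      have h2 := Nat.even_iff.mp hevs
      exact ⟨Nat.even_iff.mpr (by omega), Nat.even_iff.mpr (by omega)⟩
    · rintro ⟨hL', hM'⟩
      have h2r : 2 ∣ 3 * L := (hL'.mul_left 3).two_dvd
      have h2s : 2 ∣ 3 * M := (hM'.mul_left 3).two_dvd
      exact ⟨cns _ _, cns_proper h2r h2s, cns_nonsingular h2r h2s⟩
  · intro l m hLl hMm
    have hl : 1 ≤ l := by omega
    have hm : 1 ≤ m := by omega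
    haveI : NeZero (6 * l) := ⟨by omega⟩
    haveI : NeZero (6 * m) := ⟨by omega⟩
    have h2r : 2 ∣ 6 * l := ⟨3 * l, by ring⟩
    have h2s : 2 ∣ 6 * m := ⟨3 * m, by ring⟩
    have h3r : 3 ∣ 6 * l := ⟨2 * l, by ring⟩
    have h3s : 3 ∣ 6 * m := ⟨2 * m, by ring⟩
    refine ⟨cns_proper h2r h2s, cns_nonsingular h2r h2s, ?_, ?_⟩
    · rw [cns_deg l m hl hm]
      exact Int.natAbs_natCast _
    · intro hlo hmo
      refine ⟨cns _ _, tc _ _, cns_proper h2r h2s, tc_proper h3r h3s, ?_⟩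
      intro hKE
      obtain ⟨-, hdeg⟩ := kempe_equiv_inv (6*l) (6*m) (by omega) (by omega) _ _
        (cns_proper h2r h2s) hKE
      rw [cns_deg l m hl hm, tc_deg h3r h3s] at hdeg
      obtain ⟨a, ha⟩ := hlo
      obtain ⟨b, hb⟩ := hmo
      have h18 : (18*l*m : ℕ) = 4*(18*a*b + 9*a + 9*b + 4) + 2 := by
        subst ha hb; ring
      rw [h18] at hdeg
      have h4 : ∀ X : ℕ, (((4*X+2 : ℕ) : ℤ) : ZMod 4) = 2 := by
        intro X
        push_cast
        rw [show ((4 : ZMod 4)) = 0 from by decide]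
        ring
      rw [h4, Int.cast_zero] at hdeg
      exact (by decide : (0 : ZMod 4) ≠ 2) hdeg
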